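/- Let z₀ be a Gaussian integer, let R > 0 and 0 < θ ≤ 2π be real numbers, and let W be a finite set of Gaussian integers with z₀ ∉ W such that: (i) |w − z₀| ≤ R for every w ∈ W; (ii) there is a real θ₀ such that the argument of w − z₀ lies in [θ₀, θ₀ + θ] for every w ∈ W; and (iii) no two distinct elements w, w′ ∈ W satisfy w − z₀ = λ·(w′ − z₀) for some positive real λ. Then |W| ≤ θ·R² + 1. -/

import Mathlib

private lemma abs_sin_le_self {s : ℝ} (h : 0 < s) : |Real.sin s| ≤ s := by
  rcases le_total s 1 with h1 | h1
  · rw [abs_of_nonneg (Real.sin_nonneg_of_nonneg_of_le_pi h.le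
      (h1.trans (by linarith [Real.pi_gt_three])))]
    exact Real.sin_le h.le
  · exact (abs_le.mpr ⟨Real.neg_one_le_sin s, Real.sin_le_one s⟩).trans h1

private lemma gauss_one_le_abs (a b : ℤ) (h : (a:ℂ) + b * Complex.I ≠ 0) :
    1 ≤ ‖(a:ℂ) + b * Complex.I‖ := by
  have h2 : ‖(a:ℂ)+b*Complex.I‖ ^ 2 = ((a^2 + b^2 : ℤ) : ℝ) := by
    rw [Complex.sq_norm]; simp [Complex.normSq_apply]; ring
  have h3 : (1:ℤ) ≤ a^2 + b^2 := by
    rcases eq_or_ne a 0 with ha | ha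
    · rcases eq_or_ne b 0 with hb | hb
      · exfalso; apply h; simp [ha, hb]
      · nlinarith [sq_nonneg a, sq_nonneg b, Int.one_le_abs hb, sq_abs b]
    · nlinarith [sq_nonneg a, sq_nonneg b, Int.one_le_abs ha, sq_abs a]
  nlinarith [norm_nonneg ((a:ℂ)+b*Complex.I),
    (by exact_mod_cast h3 : (1:ℝ) ≤ ((a^2+b^2:ℤ):ℝ)), h2]

theorem stmt9 (z₀ : ℂ) (hz₀ : ∃ a b : ℤ, z₀ = (a : ℂ) + (b : ℂ) * Complex.I)
    (R θ : ℝ) (hR : 0 < R) (hθ : 0 < θ) (hθ2 : θ ≤ 2 * Real.pi)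
    (W : Finset ℂ) (hW : ∀ w ∈ W, ∃ a b : ℤ, w = (a : ℂ) + (b : ℂ) * Complex.I)
    (hz₀W : z₀ ∉ W)
    (hrad : ∀ w ∈ W, ‖w - z₀‖ ≤ R)
    (θ₀ : ℝ)
    (harg : ∀ w ∈ W, ∃ ρ t : ℝ, 0 < ρ ∧ θ₀ ≤ t ∧ t ≤ θ₀ + θ ∧
      w - z₀ = (ρ : ℂ) * Complex.exp ((t : ℂ) * Complex.I))
    (hray : ∀ w ∈ W, ∀ w' ∈ W, w ≠ w' → ∀ l : ℝ, 0 < l → w - z₀ ≠ (l : ℂ) * (w' - z₀)) :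
    (W.card : ℝ) ≤ θ * R ^ 2 + 1 := by
  classical
  rcases W.eq_empty_or_nonempty with rfl | ⟨w₁, hw₁⟩
  · simp; positivity
  have hG : ∀ w ∈ W, ∃ a b : ℤ, w - z₀ = (a:ℂ) + (b:ℂ) * Complex.I := by
    intro w hw
    obtain ⟨a, b, hab⟩ := hW w hw
    obtain ⟨a₀, b₀, h₀⟩ := hz₀
    exact ⟨a - a₀, b - b₀, by rw [hab, h₀]; push_cast; ring⟩
  have hne0 : ∀ w ∈ W, w - z₀ ≠ 0 := by
    intro w hw h
    exact hz₀W (by rwa [sub_eq_zero.mp h] at hw)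
  have habs1 : ∀ w ∈ W, 1 ≤ ‖w - z₀‖ := by
    intro w hw
    obtain ⟨a, b, hab⟩ := hG w hw
    rw [hab]
    exact gauss_one_le_abs a b (hab ▸ hne0 w hw)
  have hR1 : 1 ≤ R := (habs1 w₁ hw₁).trans (hrad w₁ hw₁)
  choose! ρ t hρ ht1 ht2 heq using harg
  have hre : ∀ w ∈ W, (w - z₀).re = ρ w * Real.cos (t w) := by
    intro w hw; rw [heq w hw]
    simp [Complex.exp_mul_I, Complex.cos_ofReal_re, Complex.sin_ofReal_re]
  have him : ∀ w ∈ W, (w - z₀).im = ρ w * Real.sin (t w) := by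
    intro w hw; rw [heq w hw]
    simp [Complex.exp_mul_I, Complex.cos_ofReal_re, Complex.sin_ofReal_re]
  have habsρ : ∀ w ∈ W, ρ w ≤ R := by
    intro w hw
    have h := hrad w hw
    rw [heq w hw] at h
    simpa [Complex.norm_exp, abs_of_nonneg (hρ w hw).le] using h
  -- key separation lemma
  have key : ∀ w ∈ W, ∀ w' ∈ W, w ≠ w' → t w ≤ t w' → 1 / R ^ 2 ≤ t w' - t w := by
    intro w hw w' hw' hne hle
    have hρw := hρ w hw
    have hρw' := hρ w' hw'
    set s := t w' - t w with hs
    have hs0 : 0 ≤ s := by simp [hs]; linarith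
    rcases eq_or_lt_of_le hs0 with hseq | hspos
    · exfalso
      apply hray w hw w' hw' hne (ρ w / ρ w') (div_pos hρw hρw')
      rw [heq w hw, heq w' hw']
      have ht : t w = t w' := by simp [hs] at hseq; linarith
      rw [ht]
      have : ((ρ w / ρ w' : ℝ) : ℂ) * ((ρ w' : ℝ) : ℂ) = ((ρ w : ℝ) : ℂ) := by
        push_cast
        rw [div_mul_cancel₀ _ (Complex.ofReal_ne_zero.mpr hρw'.ne')]
      rw [← mul_assoc, this]
    · obtain ⟨a, b, hab⟩ := hG w hw
      obtain ⟨c, d, hcd⟩ := hG w' hw'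
      have ha : (a : ℝ) = ρ w * Real.cos (t w) := by rw [← hre w hw, hab]; simp
      have hb : (b : ℝ) = ρ w * Real.sin (t w) := by rw [← him w hw, hab]; simp
      have hc : (c : ℝ) = ρ w' * Real.cos (t w') := by rw [← hre w' hw', hcd]; simp
      have hd : (d : ℝ) = ρ w' * Real.sin (t w') := by rw [← him w' hw', hcd]; simp
      have hK : ((a * d - b * c : ℤ) : ℝ) = ρ w * ρ w' * Real.sin s := by
        rw [hs, Real.sin_sub]
        push_cast
        rw [ha, hb, hc, hd]
        ring
      rcases eq_or_ne (a * d - b * c) 0 with hK0 | hK0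
      · -- parallel or antiparallel: s ≥ π
        have hsin : Real.sin s = 0 := by
          have h0 : ((a * d - b * c : ℤ) : ℝ) = 0 := by exact_mod_cast hK0
          rw [hK] at h0
          rcases mul_eq_zero.mp h0 with h | h
          · exact absurd h (by positivity)
          · exact h
        have hπ : Real.pi ≤ s := by
          by_contra hlt
          push_neg at hlt
          exact absurd hsin (ne_of_gt (Real.sin_pos_of_pos_of_lt_pi hspos hlt))
        have h1 : 1 / R ^ 2 ≤ 1 := by
          rw [div_le_one (by positivity)]
          nlinarith
        linarith [Real.pi_gt_three]
      · have h1 : (1 : ℝ) ≤ |((a * d - b * c : ℤ) : ℝ)| := by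
          rw [← Int.cast_abs]
          exact_mod_cast Int.one_le_abs hK0
        have h2 : |((a * d - b * c : ℤ) : ℝ)| = ρ w * ρ w' * |Real.sin s| := by
          rw [hK, abs_mul, abs_of_nonneg (by positivity : (0:ℝ) ≤ ρ w * ρ w')]
        have hsle : |Real.sin s| ≤ s := abs_sin_le_self hspos
        have hρR : ρ w * ρ w' ≤ R ^ 2 := by nlinarith [habsρ w hw, habsρ w' hw']
        rw [div_le_iff₀ (by positivity)]
        nlinarith [abs_nonneg (Real.sin s)]
  set g : ℂ → ℤ := fun w => ⌊(t w - θ₀) * R ^ 2⌋ with hg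
  have hinj : Set.InjOn g W := by
    intro w hw w' hw' hgw
    by_contra hne
    have h1 : |(t w - θ₀) * R ^ 2 - (t w' - θ₀) * R ^ 2| < 1 :=
      Int.abs_sub_lt_one_of_floor_eq_floor hgw
    rw [abs_sub_lt_iff] at h1
    rcases le_total (t w) (t w') with h | h
    · have hk := key w hw w' hw' hne h
      rw [div_le_iff₀ (by positivity)] at hk
      nlinarith
    · have hk := key w' hw' w hw (Ne.symm hne) h
      rw [div_le_iff₀ (by positivity)] at hk
      nlinarith
  have hsub : W.image g ⊆ Finset.Icc 0 ⌊θ * R ^ 2⌋ := by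
    intro n hn
    rw [Finset.mem_image] at hn
    obtain ⟨w, hw, rfl⟩ := hn
    rw [Finset.mem_Icc]
    constructor
    · exact Int.floor_nonneg.mpr (by nlinarith [ht1 w hw])
    · exact Int.floor_le_floor (by nlinarith [ht2 w hw])
  have hcard : W.card = (W.image g).card := (Finset.card_image_of_injOn hinj).symm
  have hle : (W.image g).card ≤ (Finset.Icc 0 ⌊θ * R ^ 2⌋).card := Finset.card_le_card hsub
  have hfl0 : (0:ℤ) ≤ ⌊θ * R ^ 2⌋ := Int.floor_nonneg.mpr (by positivity)
  have hIcc : ((Finset.Icc 0 ⌊θ * R ^ 2⌋).card : ℝ) ≤ θ * R ^ 2 + 1 := by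
    rw [Int.card_Icc]
    have h3 : ((⌊θ * R ^ 2⌋ + 1 - 0).toNat : ℝ) = (⌊θ * R ^ 2⌋ : ℝ) + 1 := by
      rw [show ((⌊θ * R ^ 2⌋ + 1 - 0).toNat : ℝ) = (((⌊θ * R ^ 2⌋ + 1 - 0).toNat : ℤ) : ℝ) by push_cast; ring,
        Int.toNat_of_nonneg (by omega)]
      push_cast; ring
    rw [h3]
    linarith [Int.floor_le (θ * R ^ 2)]
  calc (W.card : ℝ) = ((W.image g).card : ℝ) := by rw [hcard]
    _ ≤ ((Finset.Icc 0 ⌊θ * R ^ 2⌋).card : ℝ) := by exact_mod_cast hle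
    _ ≤ θ * R ^ 2 + 1 := hIcc
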